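/- Define L1 = (q1 p2 - q2 p1)/2, L2 = (I' - I)/2 where I = p2^2 + γ1 q2 p2 + γ2(q1^2+q2^2)p2^2 and I' = p1^2 + γ1 q1 p1 + γ2(q1^2+q2^2)p1^2, and L3 = {L1, L2}. Then L3 = (1 + γ2(q1^2+q2^2)) p1 p2 + (γ1/2)(q1 p2 + q2 p1). -/

import Mathlib

open Real
noncomputable def pb (f g : ℝ → ℝ → ℝ → ℝ → ℝ) : ℝ → ℝ → ℝ → ℝ → ℝ :=
  fun q1 q2 p1 p2 =>
      deriv (fun x => f x q2 p1 p2) q1 * deriv (fun x => g q1 q2 x p2) p1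
    + deriv (fun x => f q1 x p1 p2) q2 * deriv (fun x => g q1 q2 p1 x) p2
    - deriv (fun x => f q1 q2 x p2) p1 * deriv (fun x => g x q2 p1 p2) q1
    - deriv (fun x => f q1 q2 p1 x) p2 * deriv (fun x => g q1 x p1 p2) q2

theorem zernike_L3_explicit (γ1 γ2 : ℝ) :
    pb (fun q1 q2 p1 p2 => (q1*p2 - q2*p1)/2)
       (fun q1 q2 p1 p2 =>
         ((p1^2 + γ1*q1*p1 + γ2*(q1^2 + q2^2)*p1^2)
          - (p2^2 + γ1*q2*p2 + γ2*(q1^2 + q2^2)*p2^2))/2)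
      = fun q1 q2 p1 p2 =>
          (1 + γ2*(q1^2 + q2^2))*p1*p2 + (γ1/2)*(q1*p2 + q2*p1) := by
  funext q1 q2 p1 p2
  simp only [pb]
  have e1 : deriv (fun x => (x*p2 - q2*p1)/2) q1 = p2/2 := by
    simpa using ((((hasDerivAt_id' q1).mul_const p2).sub_const (q2*p1)).div_const 2).deriv
  have e2 : deriv (fun x => (q1*p2 - x*p1)/2) q2 = -p1/2 := by
    simpa using ((((hasDerivAt_id' q2).mul_const p1).const_sub (q1*p2)).div_const 2).deriv
  have e3 : deriv (fun x => (q1*p2 - q2*x)/2) p1 = -q2/2 := by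
    simpa using ((((hasDerivAt_id' p1).const_mul q2).const_sub (q1*p2)).div_const 2).deriv
  have e4 : deriv (fun x => (q1*x - q2*p1)/2) p2 = q1/2 := by
    simpa using ((((hasDerivAt_id' p2).const_mul q1).sub_const (q2*p1)).div_const 2).deriv
  have e5 : deriv (fun x => (x^2 + γ1*q1*x + γ2*(q1^2 + q2^2)*x^2
      - (p2^2 + γ1*q2*p2 + γ2*(q1^2 + q2^2)*p2^2))/2) p1
      = (2*p1 + γ1*q1 + γ2*(q1^2 + q2^2)*(2*p1))/2 := by
    have h := (((((hasDerivAt_pow 2 p1).add ((hasDerivAt_id' p1).const_mul (γ1*q1))).add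
      ((hasDerivAt_pow 2 p1).const_mul (γ2*(q1^2 + q2^2)))).sub_const
      (p2^2 + γ1*q2*p2 + γ2*(q1^2 + q2^2)*p2^2)).div_const 2).deriv
    simp only [Pi.add_def] at h
    rw [h]; push_cast; ring
  have e6 : deriv (fun x => (p1^2 + γ1*q1*p1 + γ2*(q1^2 + q2^2)*p1^2
      - (x^2 + γ1*q2*x + γ2*(q1^2 + q2^2)*x^2))/2) p2
      = -((2*p2 + γ1*q2 + γ2*(q1^2 + q2^2)*(2*p2))/2) := by
    have h := (((((hasDerivAt_pow 2 p2).add ((hasDerivAt_id' p2).const_mul (γ1*q2))).add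
      ((hasDerivAt_pow 2 p2).const_mul (γ2*(q1^2 + q2^2)))).const_sub
      (p1^2 + γ1*q1*p1 + γ2*(q1^2 + q2^2)*p1^2)).div_const 2).deriv
    simp only [Pi.add_def] at h
    rw [h]; push_cast; ring
  have e7 : deriv (fun x => (p1^2 + γ1*x*p1 + γ2*(x^2 + q2^2)*p1^2
      - (p2^2 + γ1*q2*p2 + γ2*(x^2 + q2^2)*p2^2))/2) q1
      = (γ1*p1 + γ2*(2*q1)*p1^2 - γ2*(2*q1)*p2^2)/2 := by
    have h1 : HasDerivAt (fun x : ℝ => p1^2 + γ1*x*p1 + γ2*(x^2 + q2^2)*p1^2)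
        (γ1*p1 + γ2*(2*q1)*p1^2) q1 := by
      have := ((((hasDerivAt_id' q1).const_mul γ1).mul_const p1).const_add (p1^2)).add
        ((((hasDerivAt_pow 2 q1).add_const (q2^2)).const_mul γ2).mul_const (p1^2))
      refine this.congr_deriv ?_
      push_cast; ring
    have h2 : HasDerivAt (fun x : ℝ => p2^2 + γ1*q2*p2 + γ2*(x^2 + q2^2)*p2^2)
        (γ2*(2*q1)*p2^2) q1 := by
      have := ((((hasDerivAt_pow 2 q1).add_const (q2^2)).const_mul γ2).mul_const (p2^2)).const_add
        (p2^2 + γ1*q2*p2)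
      refine this.congr_deriv ?_
      push_cast; ring
    exact ((h1.sub h2).div_const 2).deriv
  have e8 : deriv (fun x => (p1^2 + γ1*q1*p1 + γ2*(q1^2 + x^2)*p1^2
      - (p2^2 + γ1*x*p2 + γ2*(q1^2 + x^2)*p2^2))/2) q2
      = (γ2*(2*q2)*p1^2 - (γ1*p2 + γ2*(2*q2)*p2^2))/2 := by
    have h1 : HasDerivAt (fun x : ℝ => p1^2 + γ1*q1*p1 + γ2*(q1^2 + x^2)*p1^2)
        (γ2*(2*q2)*p1^2) q2 := by
      have := ((((hasDerivAt_pow 2 q2).const_add (q1^2)).const_mul γ2).mul_const (p1^2)).const_add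
        (p1^2 + γ1*q1*p1)
      refine this.congr_deriv ?_
      push_cast; ring
    have h2 : HasDerivAt (fun x : ℝ => p2^2 + γ1*x*p2 + γ2*(q1^2 + x^2)*p2^2)
        (γ1*p2 + γ2*(2*q2)*p2^2) q2 := by
      have := ((((hasDerivAt_id' q2).const_mul γ1).mul_const p2).const_add (p2^2)).add
        ((((hasDerivAt_pow 2 q2).const_add (q1^2)).const_mul γ2).mul_const (p2^2))
      refine this.congr_deriv ?_
      push_cast; ring
    exact ((h1.sub h2).div_const 2).deriv
  rw [e1, e2, e3, e4, e5, e6, e7, e8]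
  ring
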